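/- The two-qubit density matrix ρ̃ = (1/4)·(1₄ + (1/2)·σ₃⊗1₂ + (1/2)·1₂⊗σ₃ + (1/√3)·(σ₁⊗σ₂ + σ₂⊗σ₁ + σ₃⊗σ₃)) is entangled, i.e. not separable: there exists no finite family of weights p_k ≥ 0 with Σ_k p_k = 1 and 2×2 density matrices A_k, B_k such that ρ̃ = Σ_k p_k · (A_k ⊗ B_k). -/

import Mathlib

open Matrix Complex BigOperators Kronecker
open scoped ComplexOrder

/-- The three Pauli matrices σ₁, σ₂, σ₃ (indexed by `Fin 3`). -/
noncomputable def pauli : Fin 3 → Matrix (Fin 2) (Fin 2) ℂ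
  | 0 => !![0, 1; 1, 0]
  | 1 => !![0, -Complex.I; Complex.I, 0]
  | 2 => !![1, 0; 0, -1]

/-- A two-qubit state is separable if it is a finite convex combination of Kronecker
products of 2×2 density matrices. -/
def SeparableState (ρ : Matrix (Fin 2 × Fin 2) (Fin 2 × Fin 2) ℂ) : Prop :=
  ∃ (n : ℕ) (p : Fin n → ℝ) (A B : Fin n → Matrix (Fin 2) (Fin 2) ℂ),
    (∀ k, 0 ≤ p k) ∧ (∑ k, p k = 1) ∧
    (∀ k, (A k).PosSemidef ∧ (A k).trace = 1) ∧
    (∀ k, (B k).PosSemidef ∧ (B k).trace = 1) ∧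
    ρ = ∑ k, (p k : ℂ) • (A k ⊗ₖ B k)

/-- The state
`ρ̃ = (1/4)(1₄ + (1/2) σ₃⊗1 + (1/2) 1⊗σ₃ + (1/√3)(σ₁⊗σ₂ + σ₂⊗σ₁ + σ₃⊗σ₃))`. -/
noncomputable def rhoTildeMax : Matrix (Fin 2 × Fin 2) (Fin 2 × Fin 2) ℂ :=
  (1 / 4 : ℂ) • ((1 : Matrix (Fin 2 × Fin 2) (Fin 2 × Fin 2) ℂ)
    + (1 / 2 : ℂ) • (pauli 2 ⊗ₖ (1 : Matrix (Fin 2) (Fin 2) ℂ))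
    + (1 / 2 : ℂ) • ((1 : Matrix (Fin 2) (Fin 2) ℂ) ⊗ₖ pauli 2)
    + ((1 / Real.sqrt 3 : ℝ) : ℂ) •
        (pauli 0 ⊗ₖ pauli 1 + pauli 1 ⊗ₖ pauli 0 + pauli 2 ⊗ₖ pauli 2))

/-- Partial transpose on the second factor. -/
def PT (ρ : Matrix (Fin 2 × Fin 2) (Fin 2 × Fin 2) ℂ) :
    Matrix (Fin 2 × Fin 2) (Fin 2 × Fin 2) ℂ :=
  fun i k => ρ (i.1, k.2) (k.1, i.2)

lemma PT_kron (A B : Matrix (Fin 2) (Fin 2) ℂ) : PT (A ⊗ₖ B) = A ⊗ₖ Bᵀ := by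
  ext ⟨i1, i2⟩ ⟨k1, k2⟩
  simp [PT, Matrix.kroneckerMap_apply, Matrix.transpose_apply]

lemma PT_smul (c : ℂ) (M : Matrix (Fin 2 × Fin 2) (Fin 2 × Fin 2) ℂ) :
    PT (c • M) = c • PT M := by
  ext i k; simp [PT]

lemma PT_sum {n : ℕ} (f : Fin n → Matrix (Fin 2 × Fin 2) (Fin 2 × Fin 2) ℂ) :
    PT (∑ k, f k) = ∑ k, PT (f k) := by
  ext i j
  simp [PT, Matrix.sum_apply]

lemma psd_add {n : Type*} [Fintype n] {A B : Matrix n n ℂ}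
    (hA : A.PosSemidef) (hB : B.PosSemidef) : (A + B).PosSemidef := by
  refine posSemidef_iff_dotProduct_mulVec.mpr ⟨hA.1.add hB.1, fun x => ?_⟩
  rw [Matrix.add_mulVec, dotProduct_add]
  exact add_nonneg (hA.dotProduct_mulVec_nonneg x) (hB.dotProduct_mulVec_nonneg x)

lemma psd_smul {n : Type*} [Fintype n] {A : Matrix n n ℂ} (hA : A.PosSemidef)
    {p : ℝ} (hp : 0 ≤ p) : ((p : ℂ) • A).PosSemidef := by
  rw [posSemidef_iff_dotProduct_mulVec]
  constructor
  · unfold Matrix.IsHermitian at *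
    rw [Matrix.conjTranspose_smul, hA.1.eq]
    congr 1
    simp [Complex.ext_iff]
  · intro x
    rw [Matrix.smul_mulVec, dotProduct_smul]
    exact mul_nonneg (by exact_mod_cast Complex.zero_le_real.mpr hp) (hA.dotProduct_mulVec_nonneg x)

lemma psd_kron {A B : Matrix (Fin 2) (Fin 2) ℂ}
    (hA : A.PosSemidef) (hB : B.PosSemidef) : (A ⊗ₖ B).PosSemidef := by
  exact hA.kronecker hB

/-- The state `ρ̃` (with `a = b = c = 1/√3`) is entangled, i.e. not
separable. -/
theorem rhoTildeMax_entangled : ¬ SeparableState rhoTildeMax := by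
  rintro ⟨n, p, A, B, hp, _, hA, hB, hrho⟩
  -- the partial transpose of a separable state is PSD
  have hPSD : (PT rhoTildeMax).PosSemidef := by
    rw [hrho, PT_sum]
    have : ∀ k, (PT ((p k : ℂ) • (A k ⊗ₖ B k))).PosSemidef := by
      intro k
      rw [PT_smul, PT_kron]
      exact psd_smul (psd_kron (hA k).1 ((hB k).1.transpose)) (hp k)
    classical
    refine Finset.sum_induction _ _ (fun a b ha hb => psd_add ha hb)
      Matrix.PosSemidef.zero (fun k _ => this k)
  -- witness vector
  set v : Fin 2 × Fin 2 → ℂ := fun x => !![(0:ℂ), 1; -Complex.I, 0] x.1 x.2 with hv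
  have hnn := hPSD.dotProduct_mulVec_nonneg v
  have hval : dotProduct (star v) (PT rhoTildeMax *ᵥ v)
      = (((1 : ℝ) - 3 / Real.sqrt 3) / 2 : ℝ) := by
    simp only [dotProduct, Matrix.mulVec, Fintype.sum_prod_type, Fin.sum_univ_two,
      Pi.star_apply, hv, PT, rhoTildeMax, pauli, Matrix.add_apply, Matrix.smul_apply,
      Matrix.kroneckerMap_apply, Matrix.one_apply]
    norm_num [Complex.ext_iff]
    ring
  rw [hval] at hnn
  have h3 : (1 : ℝ) < Real.sqrt 3 := by
    nlinarith [Real.sq_sqrt (by norm_num : (3:ℝ) ≥ 0), Real.sqrt_nonneg 3]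
  have hs : 3 / Real.sqrt 3 = Real.sqrt 3 := by
    rw [eq_comm, eq_div_iff (by positivity)]
    nlinarith [Real.sq_sqrt (by norm_num : (3:ℝ) ≥ 0)]
  have hneg : ((1 : ℝ) - 3 / Real.sqrt 3) / 2 < 0 := by
    rw [hs]; linarith
  have := Complex.zero_le_real.mp hnn
  linarith
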